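/- arXiv:1303.5678 — 6 statements merged into one kernel-verified Lean document; each statement's English description precedes it below -/
import Mathlib

section
/- Let N, M1, M2, d0, d1, d2 be natural numbers, and let H1 be a complex N × M1 matrix and H2 a complex N × M2 matrix such that the N × (M1 + M2) block matrix A = [H1 H2] (H1 and H2 placed side by side) has rank min(N, M1 + M2). Suppose V ⊆ ℂ^N, U1 ⊆ ℂ^{M1}, U2 ⊆ ℂ^{M2} are ℂ-subspaces with dim V = d0, dim U1 = d1, dim U2 = d2, and that for all v ∈ V and u ∈ U1 the standard Hermitian inner product of v with H1·u is zero, and for all v ∈ V and u ∈ U2 the standard Hermitian inner product of v with H2·u is zero. Then d0 + d1 + d2 ≤ max(N, M1 + M2). -/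
open Matrix Module

section aux

variable {R M M₂ : Type*} [Ring R] [AddCommGroup M] [AddCommGroup M₂] [Module R M] [Module R M₂]

/-- Auxiliary: `p.prod q` is linearly equivalent to `p × q`. -/
def Submodule.prodEquivAux (p : Submodule R M) (q : Submodule R M₂) :
    (p.prod q) ≃ₗ[R] p × q where
  toFun x := (⟨x.1.1, x.2.1⟩, ⟨x.1.2, x.2.2⟩)
  invFun y := ⟨(y.1.1, y.2.1), y.1.2, y.2.2⟩
  map_add' _ _ := rfl
  map_smul' _ _ := rfl
  left_inv _ := rfl
  right_inv _ := rfl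

end aux

/-- Auxiliary: a self-orthogonal vector (for the Hermitian dot product) is zero. -/
lemma star_dotProduct_self_eq_zero {n : ℕ} (v : Fin n → ℂ) (h : star v ⬝ᵥ v = 0) : v = 0 := by
  have h' : (↑(∑ i, Complex.normSq (v i)) : ℂ) = 0 := by
    rw [Complex.ofReal_sum]
    rw [dotProduct] at h
    convert h using 2 with i
    simp [Complex.normSq_eq_conj_mul_self]
  rw [Complex.ofReal_eq_zero] at h'
  have hz := (Finset.sum_eq_zero_iff_of_nonneg (by intro i _; exact Complex.normSq_nonneg _)).mp h'
  funext i
  exact Complex.normSq_eq_zero.mp (hz i (Finset.mem_univ i))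

/-- r = 1 case of the alignment-path necessary condition.
If the block matrix `A = [H1 H2]` has full rank, and `V` is orthogonal (for the
standard Hermitian inner product) to `H1·U1` and to `H2·U2`, then
`dim V + dim U1 + dim U2 ≤ max N (M1 + M2)`. -/
theorem alignment_path_r1_necessary
    (N M1 M2 d0 d1 d2 : ℕ)
    (H1 : Matrix (Fin N) (Fin M1) ℂ) (H2 : Matrix (Fin N) (Fin M2) ℂ)
    (A : Matrix (Fin N) (Fin M1 ⊕ Fin M2) ℂ)
    (hA : A = Matrix.of fun i => Sum.elim (H1 i) (H2 i))
    (hrank : A.rank = min N (M1 + M2))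
    (V : Submodule ℂ (Fin N → ℂ))
    (U1 : Submodule ℂ (Fin M1 → ℂ))
    (U2 : Submodule ℂ (Fin M2 → ℂ))
    (hV : Module.finrank ℂ V = d0)
    (hU1 : Module.finrank ℂ U1 = d1)
    (hU2 : Module.finrank ℂ U2 = d2)
    (h1 : ∀ v ∈ V, ∀ u ∈ U1, star v ⬝ᵥ H1.mulVec u = 0)
    (h2 : ∀ v ∈ V, ∀ u ∈ U2, star v ⬝ᵥ H2.mulVec u = 0) :
    d0 + d1 + d2 ≤ max N (M1 + M2) := by
  classical
  set e := LinearEquiv.sumArrowLequivProdArrow (Fin M1) (Fin M2) ℂ ℂ with he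
  set T := A.mulVecLin with hT
  set W : Submodule ℂ (Fin M1 ⊕ Fin M2 → ℂ) :=
    (U1.prod U2).map (e.symm : ((Fin M1 → ℂ) × (Fin M2 → ℂ)) →ₗ[ℂ] (Fin M1 ⊕ Fin M2 → ℂ))
    with hWdef
  set S : Submodule ℂ (Fin N → ℂ) := W.map T with hSdef
  -- dim W = d1 + d2
  have hWrank : finrank ℂ W = d1 + d2 := by
    rw [hWdef, LinearEquiv.finrank_map_eq]
    calc finrank ℂ (U1.prod U2) = finrank ℂ (U1 × U2) :=
          (Submodule.prodEquivAux U1 U2).finrank_eq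
      _ = d1 + d2 := by rw [Module.finrank_prod, hU1, hU2]
  -- orthogonality of V and S
  have horth : ∀ v ∈ V, ∀ s ∈ S, star v ⬝ᵥ s = 0 := by
    rintro v hv s hs
    rcases hs with ⟨w, hw, rfl⟩
    rcases hw with ⟨p, hp, rfl⟩
    obtain ⟨p1, p2⟩ := p
    have hdecomp : T ((e.symm : ((Fin M1 → ℂ) × (Fin M2 → ℂ)) →ₗ[ℂ] (Fin M1 ⊕ Fin M2 → ℂ)) (p1, p2))
        = H1.mulVec p1 + H2.mulVec p2 := by
      ext i
      simp only [hT, Matrix.mulVecLin_apply, hA, Matrix.mulVec, dotProduct,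
        Fintype.sum_sum_type, Matrix.of_apply, Sum.elim_inl, Sum.elim_inr, Pi.add_apply, he,
        LinearEquiv.coe_coe, LinearEquiv.sumArrowLequivProdArrow_symm_apply_inl,
        LinearEquiv.sumArrowLequivProdArrow_symm_apply_inr]
    rw [hdecomp, dotProduct_add, h1 v hv p1 hp.1, h2 v hv p2 hp.2, add_zero]
  -- V ⊓ S = ⊥
  have hVS : V ⊓ S = ⊥ := by
    rw [Submodule.eq_bot_iff]
    rintro v ⟨hv1, hv2⟩
    exact star_dotProduct_self_eq_zero v (horth v hv1 v hv2)
  -- d0 + dim S ≤ N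
  have hstep1 : d0 + finrank ℂ S ≤ N := by
    have hsum := Submodule.finrank_sup_add_finrank_inf_eq V S
    rw [hVS] at hsum
    have hle : finrank ℂ ↥(V ⊔ S) ≤ N := by
      simpa [Module.finrank_pi] using Submodule.finrank_le (V ⊔ S)
    have hbot : finrank ℂ (⊥ : Submodule ℂ (Fin N → ℂ)) = 0 := by simp
    omega
  -- rank-nullity for T
  have hker : finrank ℂ (LinearMap.range T) + finrank ℂ (LinearMap.ker T) = M1 + M2 := by
    have := LinearMap.finrank_range_add_finrank_ker T
    simpa [Module.finrank_pi] using this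
  have hrange : finrank ℂ (LinearMap.range T) = min N (M1 + M2) := by
    rw [← hrank, Matrix.rank]
  -- dim W ≤ dim S + dim ker T
  have hstep2 : finrank ℂ W ≤ finrank ℂ S + finrank ℂ (LinearMap.ker T) := by
    have h3 := LinearMap.finrank_range_add_finrank_ker (T.domRestrict W)
    rw [LinearMap.range_domRestrict, ← hSdef] at h3
    have hkerle : finrank ℂ (LinearMap.ker (T.domRestrict W)) ≤
        finrank ℂ (LinearMap.ker T) := by
      let g : LinearMap.ker (T.domRestrict W) →ₗ[ℂ] LinearMap.ker T :=
        LinearMap.codRestrict _ (W.subtype ∘ₗ (LinearMap.ker (T.domRestrict W)).subtype)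
          (fun x => x.2)
      have hg : Function.Injective g := by
        intro x y hxy
        have h5 := congrArg Subtype.val hxy
        have h6 : ((x : W) : Fin M1 ⊕ Fin M2 → ℂ) = ((y : W) : Fin M1 ⊕ Fin M2 → ℂ) := h5
        exact Subtype.ext (Subtype.ext h6)
      exact LinearMap.finrank_le_finrank_of_injective hg
    omega
  have hmm : min N (M1 + M2) + max N (M1 + M2) = N + (M1 + M2) := min_add_max _ _
  omega
end

section
/- Let r ≥ 1 and N, M be natural numbers. Let B1, …, Br and C1, …, Cr be complex N × M matrices, and let A_r be the associated block matrix. Assume A_r has rank min(rN, (r+1)M). Suppose V1, …, Vr are ℂ-subspaces of ℂ^N and U1, …, U_{r+1} are ℂ-subspaces of ℂ^M such that for each j with 1 ≤ j ≤ r: for all v ∈ Vj and u ∈ Uj the standard Hermitian inner product of v with Bj·u is zero, and for all v ∈ Vj and u ∈ U_{j+1} the standard Hermitian inner product of v with Cj·u is zero. Then (dim V1 + ⋯ + dim Vr) + (dim U1 + ⋯ + dim U_{r+1}) ≤ max(rN, (r+1)M). -/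
open Matrix

/-- The `rN × (r+1)M` block matrix whose `j`-th block row carries `B j` in block
column `j`, `C j` in block column `j+1`, and zero blocks elsewhere. -/
def alignBlock {r N M : ℕ} (B C : Fin r → Matrix (Fin N) (Fin M) ℂ) :
    Matrix (Fin r × Fin N) (Fin (r + 1) × Fin M) ℂ :=
  Matrix.of fun p q =>
    if (q.1 : ℕ) = (p.1 : ℕ) then B p.1 p.2 q.2
    else if (q.1 : ℕ) = (p.1 : ℕ) + 1 then C p.1 p.2 q.2
    else 0

section Aux

variable {R : Type*} [Semiring R] {ι : Type*} {φ : ι → Type*}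
  [∀ i, AddCommMonoid (φ i)] [∀ i, Module R (φ i)]

/-- The pi submodule is equivalent to the product of the submodules. -/
def piSubEquiv (p : ∀ i, Submodule R (φ i)) :
    (Submodule.pi (Set.univ : Set ι) p) ≃ₗ[R] ∀ i, p i where
  toFun x i := ⟨x.1 i, x.2 i (Set.mem_univ i)⟩
  invFun x := ⟨fun i => (x i).1, fun i _ => (x i).2⟩
  map_add' _ _ := rfl
  map_smul' _ _ := rfl
  left_inv _ := rfl
  right_inv _ := rfl

lemma finrank_piSub {K : Type*} [Field K] {φ : ι → Type*} [Fintype ι]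
    [∀ i, AddCommGroup (φ i)] [∀ i, Module K (φ i)] [∀ i, FiniteDimensional K (φ i)]
    (p : ∀ i, Submodule K (φ i)) :
    Module.finrank K (Submodule.pi (Set.univ : Set ι) p) = ∑ i, Module.finrank K (p i) := by
  rw [(piSubEquiv p).finrank_eq, Module.finrank_pi_fintype]

/-- If `V` is orthogonal to `W` for the standard Hermitian product, the dimensions add up to
at most the dimension of the ambient space. -/
lemma orth_finrank {ι : Type*} [Fintype ι] (V W : Submodule ℂ (ι → ℂ))
    (h : ∀ v ∈ V, ∀ w ∈ W, star v ⬝ᵥ w = 0) :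
    Module.finrank ℂ V + Module.finrank ℂ W ≤ Fintype.card ι := by
  let e : (ι → ℂ) ≃ₗ[ℂ] EuclideanSpace ℂ ι := (WithLp.linearEquiv 2 ℂ (ι → ℂ)).symm
  have hVW : V.map (e : (ι → ℂ) →ₗ[ℂ] EuclideanSpace ℂ ι)
      ≤ (W.map (e : (ι → ℂ) →ₗ[ℂ] EuclideanSpace ℂ ι))ᗮ := by
    rintro x ⟨v, hv, rfl⟩
    rw [Submodule.mem_orthogonal']
    rintro y ⟨w, hw, rfl⟩
    have := h v hv w hw
    rw [dotProduct_comm] at this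
    exact this
  have h1 := Submodule.finrank_add_finrank_orthogonal
    (W.map (e : (ι → ℂ) →ₗ[ℂ] EuclideanSpace ℂ ι))
  have h2 : Module.finrank ℂ (V.map (e : (ι → ℂ) →ₗ[ℂ] EuclideanSpace ℂ ι))
      ≤ Module.finrank ℂ ((W.map (e : (ι → ℂ) →ₗ[ℂ] EuclideanSpace ℂ ι))ᗮ) :=
    Submodule.finrank_mono hVW
  rw [LinearEquiv.finrank_map_eq] at h1 h2
  have h3 : Module.finrank ℂ (EuclideanSpace ℂ ι) = Fintype.card ι := by simp
  omega

end Aux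

/-- The action of the block matrix on a block vector. -/
lemma alignBlock_mulVec {r N M : ℕ} (B C : Fin r → Matrix (Fin N) (Fin M) ℂ)
    (u : Fin (r + 1) × Fin M → ℂ) (j : Fin r) (n : Fin N) :
    (alignBlock B C).mulVec u (j, n)
      = (B j).mulVec (fun m => u (j.castSucc, m)) n
        + (C j).mulVec (fun m => u (j.succ, m)) n := by
  classical
  simp only [Matrix.mulVec, dotProduct, alignBlock, Matrix.of_apply]
  rw [Fintype.sum_prod_type]
  have key : ∀ k : Fin (r + 1),
      (∑ m, (if (k : ℕ) = (j : ℕ) then B j n m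
        else if (k : ℕ) = (j : ℕ) + 1 then C j n m else 0) * u (k, m))
      = (if k = j.castSucc then ∑ m, B j n m * u (j.castSucc, m) else 0)
        + (if k = j.succ then ∑ m, C j n m * u (j.succ, m) else 0) := by
    intro k
    have hcs : j.castSucc ≠ j.succ := by
      simp [Fin.ext_iff, Fin.val_succ]
    rcases eq_or_ne k j.castSucc with rfl | h1
    · have : ((j.castSucc : Fin (r+1)) : ℕ) = (j : ℕ) := rfl
      simp [this, hcs]
    · rcases eq_or_ne k j.succ with rfl | h2
      · have hne : ((j.succ : Fin (r+1)) : ℕ) ≠ (j : ℕ) := by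
          simp [Fin.val_succ]
        simp [hne, Fin.val_succ, h1]
      · have hk1 : (k : ℕ) ≠ (j : ℕ) := fun h => h1 (Fin.ext (by simp [h]))
        have hk2 : (k : ℕ) ≠ (j : ℕ) + 1 := fun h => h2 (Fin.ext (by simp [Fin.val_succ, h]))
        simp [hk1, hk2, h1, h2]
  rw [Finset.sum_congr rfl fun k _ => key k, Finset.sum_add_distrib]
  simp [Finset.sum_ite_eq']

/-- general alignment-path necessary condition, Theorem 2.
If the block matrix `A_r` built from `B1,…,Br` and `C1,…,Cr` has full rank, and
for each `j` the subspace `Vj` is orthogonal to `Bj·Uj` and to `Cj·U_{j+1}`, then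
`∑ dim Vj + ∑ dim Uj ≤ max (rN) ((r+1)M)`. -/
theorem alignment_path_necessary
    (r N M : ℕ) (hr : 1 ≤ r)
    (B C : Fin r → Matrix (Fin N) (Fin M) ℂ)
    (hrank : (alignBlock B C).rank = min (r * N) ((r + 1) * M))
    (V : Fin r → Submodule ℂ (Fin N → ℂ))
    (U : Fin (r + 1) → Submodule ℂ (Fin M → ℂ))
    (horthB : ∀ j : Fin r, ∀ v ∈ V j, ∀ u ∈ U j.castSucc,
      star v ⬝ᵥ (B j).mulVec u = 0)
    (horthC : ∀ j : Fin r, ∀ v ∈ V j, ∀ u ∈ U j.succ,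
      star v ⬝ᵥ (C j).mulVec u = 0) :
    (∑ j, Module.finrank ℂ (V j)) + (∑ j, Module.finrank ℂ (U j))
      ≤ max (r * N) ((r + 1) * M) := by
  classical
  set A := alignBlock B C with hA
  set f := A.mulVecLin with hf
  let eV : (Fin r × Fin N → ℂ) ≃ₗ[ℂ] (Fin r → Fin N → ℂ) :=
    LinearEquiv.curry ℂ ℂ (Fin r) (Fin N)
  let eU : (Fin (r + 1) × Fin M → ℂ) ≃ₗ[ℂ] (Fin (r + 1) → Fin M → ℂ) :=
    LinearEquiv.curry ℂ ℂ (Fin (r + 1)) (Fin M)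
  let V' : Submodule ℂ (Fin r × Fin N → ℂ) :=
    (Submodule.pi (Set.univ) V).map (eV.symm : _ →ₗ[ℂ] _)
  let U' : Submodule ℂ (Fin (r + 1) × Fin M → ℂ) :=
    (Submodule.pi (Set.univ) U).map (eU.symm : _ →ₗ[ℂ] _)
  have hVdim : Module.finrank ℂ V' = ∑ j, Module.finrank ℂ (V j) := by
    rw [show V' = _ from rfl, LinearEquiv.finrank_map_eq, finrank_piSub]
  have hUdim : Module.finrank ℂ U' = ∑ j, Module.finrank ℂ (U j) := by
    rw [show U' = _ from rfl, LinearEquiv.finrank_map_eq, finrank_piSub]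
  -- orthogonality between V' and f(U')
  have horth : ∀ v ∈ V', ∀ w ∈ U'.map f, star v ⬝ᵥ w = 0 := by
    rintro v hv w ⟨u, hu, rfl⟩
    obtain ⟨v0, hv0, rfl⟩ := hv
    obtain ⟨u0, hu0, rfl⟩ := hu
    have hval : ∀ j n, (eV.symm v0 : Fin r × Fin N → ℂ) (j, n) = v0 j n := fun _ _ => rfl
    have huval : ∀ k m, (eU.symm u0 : Fin (r + 1) × Fin M → ℂ) (k, m) = u0 k m := fun _ _ => rfl
    show star (eV.symm v0) ⬝ᵥ A.mulVec (eU.symm u0) = 0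
    simp only [dotProduct]
    rw [Fintype.sum_prod_type]
    have : ∀ j : Fin r, (∑ n, star (eV.symm v0) (j, n) * A.mulVec (eU.symm u0) (j, n)) = 0 := by
      intro j
      have hsplit : ∀ n : Fin N, A.mulVec (eU.symm u0) (j, n)
          = (B j).mulVec (u0 j.castSucc) n + (C j).mulVec (u0 j.succ) n := by
        intro n
        rw [hA, alignBlock_mulVec]
        rfl
      calc (∑ n, star (eV.symm v0) (j, n) * A.mulVec (eU.symm u0) (j, n))
          = ∑ n, (star (v0 j) n * (B j).mulVec (u0 j.castSucc) n
              + star (v0 j) n * (C j).mulVec (u0 j.succ) n) := by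
            refine Finset.sum_congr rfl fun n _ => ?_
            rw [hsplit n, mul_add]
            rfl
        _ = star (v0 j) ⬝ᵥ (B j).mulVec (u0 j.castSucc)
              + star (v0 j) ⬝ᵥ (C j).mulVec (u0 j.succ) := by
            rw [Finset.sum_add_distrib]; rfl
        _ = 0 := by
            rw [horthB j (v0 j) (hv0 j (Set.mem_univ j)) _ (hu0 j.castSucc (Set.mem_univ _)),
              horthC j (v0 j) (hv0 j (Set.mem_univ j)) _ (hu0 j.succ (Set.mem_univ _)), add_zero]
    rw [Finset.sum_congr rfl fun j _ => this j, Finset.sum_const, smul_zero]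
  -- dimension bound from orthogonality
  have key1 : Module.finrank ℂ V' + Module.finrank ℂ (U'.map f) ≤ r * N := by
    have := orth_finrank V' (U'.map f) horth
    simpa using this
  -- dimension bound from rank-nullity on the restriction
  have key2 : Module.finrank ℂ U'
      ≤ Module.finrank ℂ (U'.map f) + Module.finrank ℂ (LinearMap.ker f) := by
    have h1 := LinearMap.finrank_range_add_finrank_ker (f.domRestrict U')
    rw [LinearMap.range_domRestrict, LinearMap.ker_domRestrict] at h1
    have hcomap : (LinearMap.ker f).comap U'.subtype
        = (LinearMap.ker f ⊓ U').comap U'.subtype := by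
      ext x
      simp only [Submodule.mem_comap, Submodule.mem_inf]
      exact ⟨fun h => ⟨h, x.2⟩, fun h => h.1⟩
    have h2 : Module.finrank ℂ ((LinearMap.ker f).comap U'.subtype)
        ≤ Module.finrank ℂ (LinearMap.ker f) := by
      rw [hcomap, (Submodule.comapSubtypeEquivOfLe inf_le_right).finrank_eq]
      exact Submodule.finrank_mono inf_le_left
    omega
  -- global rank-nullity
  have key3 : A.rank + Module.finrank ℂ (LinearMap.ker f) = (r + 1) * M := by
    have := LinearMap.finrank_range_add_finrank_ker f
    rw [Module.finrank_pi] at this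
    simpa [Matrix.rank, hf] using this
  rw [← hVdim, ← hUdim]
  rw [hrank] at key3
  omega
end

section
/- Let N, M be natural numbers and let H i j, for ordered pairs i ≠ j in {1,2,3}, be channel matrices for the 3-user M×N MIMO interference channel. Fix r ≥ 1 and assume the cyclic alignment matrix A_r starting at receiver 1 has rank min(rN, (r+1)M). If a feasible alignment strategy with dimensions (d1, d2, d3) exists, then d⟨1⟩ + d⟨r+1⟩ + d⟨r+2⟩ + 2·(d⟨2⟩ + d⟨3⟩ + ⋯ + d⟨r⟩) ≤ max(rN, (r+1)M), where ⟨j⟩ ∈ {1,2,3} denotes j reduced modulo 3. -/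
open Matrix
open Fin.NatCast

/-- The cyclic alignment matrix `A_q` starting at receiver `i` (users labelled
`0,1,2` for the paper's `1,2,3`): block row `j` (0-based) carries the channel
from transmitter `i+j+1` to receiver `i+j` and the channel from transmitter
`i+j+2` to receiver `i+j`, indices mod 3. -/
def cyclicAlign {N M : ℕ} (H : Fin 3 → Fin 3 → Matrix (Fin N) (Fin M) ℂ)
    (i : Fin 3) (q : ℕ) : Matrix (Fin q × Fin N) (Fin (q + 1) × Fin M) ℂ :=
  alignBlock
    (fun j => H (i + ((j : ℕ) : Fin 3)) (i + ((j : ℕ) : Fin 3) + 1))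
    (fun j => H (i + ((j : ℕ) : Fin 3)) (i + ((j : ℕ) : Fin 3) + 2))

/-- A feasible vector-space interference-alignment strategy with dimensions
`d i` for the 3-user channel with matrices `H i j` (channel from transmitter
`j` to receiver `i`). -/
def Feasible {N M : ℕ} (H : Fin 3 → Fin 3 → Matrix (Fin N) (Fin M) ℂ)
    (d : Fin 3 → ℕ) : Prop :=
  ∃ (U : Fin 3 → Submodule ℂ (Fin M → ℂ)) (V : Fin 3 → Submodule ℂ (Fin N → ℂ)),
    (∀ i, Module.finrank ℂ (U i) = d i) ∧
    (∀ i, Module.finrank ℂ (V i) = d i) ∧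
    (∀ i j, i ≠ j → ∀ u ∈ U j, ∀ v ∈ V i, star v ⬝ᵥ (H i j).mulVec u = 0)

/-- The Fin 3 label of the paper's user `⟨j⟩ ∈ {1,2,3}` (`j` reduced mod 3),
i.e. `(j-1) mod 3`, for `j ≥ 1`. -/
def userIdx (j : ℕ) : Fin 3 := ((j - 1 : ℕ) : Fin 3)

namespace ThreeUserAux

/-- Currying as a linear equivalence. -/
noncomputable def curryLE (α β : Type*) : (α × β → ℂ) ≃ₗ[ℂ] (α → β → ℂ) where
  toFun x i j := x (i, j)
  map_add' _ _ := rfl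
  map_smul' _ _ := rfl
  invFun f p := f p.1 p.2
  left_inv _ := rfl
  right_inv _ := rfl

/-- The product submodule is linearly equivalent to the product of the submodules. -/
noncomputable def piSubEquiv {ι : Type*} {φ : ι → Type*} [∀ i, AddCommGroup (φ i)]
    [∀ i, Module ℂ (φ i)] (p : ∀ i, Submodule ℂ (φ i)) :
    (Submodule.pi Set.univ p) ≃ₗ[ℂ] ∀ i, p i where
  toFun x i := ⟨x.1 i, Submodule.mem_pi.mp x.2 i (Set.mem_univ i)⟩
  map_add' _ _ := rfl
  map_smul' _ _ := rfl
  invFun f := ⟨fun i => f i, fun i _ => (f i).2⟩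
  left_inv _ := rfl
  right_inv _ := rfl

lemma finrank_piSub {ι : Type*} [Fintype ι] {φ : ι → Type*} [∀ i, AddCommGroup (φ i)]
    [∀ i, Module ℂ (φ i)] [∀ i, FiniteDimensional ℂ (φ i)] (p : ∀ i, Submodule ℂ (φ i)) :
    Module.finrank ℂ (Submodule.pi Set.univ p) = ∑ i, Module.finrank ℂ (p i) := by
  rw [(piSubEquiv p).finrank_eq, Module.finrank_pi_fintype]

lemma finrank_le_map_add_ker {V W : Type*} [AddCommGroup V] [Module ℂ V]
    [AddCommGroup W] [Module ℂ W] [FiniteDimensional ℂ V] [FiniteDimensional ℂ W]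
    (L : V →ₗ[ℂ] W) (X : Submodule ℂ V) :
    Module.finrank ℂ X
      ≤ Module.finrank ℂ (X.map L) + Module.finrank ℂ (LinearMap.ker L) := by
  have h := LinearMap.finrank_range_add_finrank_ker (L.domRestrict X)
  rw [LinearMap.range_domRestrict] at h
  have h2 : Module.finrank ℂ (LinearMap.ker (L.domRestrict X))
      ≤ Module.finrank ℂ (LinearMap.ker L) := by
    rw [← Submodule.finrank_map_subtype_eq X (LinearMap.ker (L.domRestrict X))]
    apply Submodule.finrank_mono
    rintro w hw
    simp only [Submodule.mem_map] at hw
    obtain ⟨⟨x, hx⟩, hk, rfl⟩ := hw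
    simpa [LinearMap.mem_ker] using hk
  omega

lemma sum_identity (g : ℕ → ℕ) (s : ℕ) :
    g 0 + g (s + 1) + g (s + 2) + 2 * ∑ j ∈ Finset.Icc 2 (s + 1), g (j - 1)
      = ∑ i ∈ Finset.range (s + 2), g (i + 1) + ∑ i ∈ Finset.range (s + 1), g i := by
  induction s with
  | zero =>
    norm_num [Finset.sum_range_succ, show Finset.Icc 2 1 = ∅ from rfl]
    omega
  | succ s ih =>
    rw [Finset.sum_Icc_succ_top (by omega : 2 ≤ s + 2)]
    rw [Finset.sum_range_succ (fun i => g (i + 1)) (s + 2),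
      Finset.sum_range_succ g (s + 1)]
    have e1 : s + 2 - 1 = s + 1 := by omega
    rw [e1]
    simp only [show s + 1 + 1 = s + 2 from rfl, show s + 1 + 2 = s + 3 from rfl,
      show s + 2 + 1 = s + 3 from rfl] at *
    omega

end ThreeUserAux

/-- Corollary 4. If the cyclic alignment matrix `A_r` starting
at receiver 1 has full rank and a feasible strategy with dimensions
`(d1, d2, d3)` exists, then
`d⟨1⟩ + d⟨r+1⟩ + d⟨r+2⟩ + 2(d⟨2⟩+⋯+d⟨r⟩) ≤ max (rN) ((r+1)M)`. -/
theorem three_user_cyclic_necessary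
    (N M r : ℕ) (hr : 1 ≤ r)
    (H : Fin 3 → Fin 3 → Matrix (Fin N) (Fin M) ℂ)
    (d : Fin 3 → ℕ)
    (hrank : (cyclicAlign H 0 r).rank = min (r * N) ((r + 1) * M))
    (hfeas : Feasible H d) :
    d (userIdx 1) + d (userIdx (r + 1)) + d (userIdx (r + 2))
        + 2 * ∑ j ∈ Finset.Icc 2 r, d (userIdx j)
      ≤ max (r * N) ((r + 1) * M) := by
  classical
  obtain ⟨U, V, hU, hV, hortho⟩ := hfeas
  set A := cyclicAlign H 0 r with hAdef
  set L := A.mulVecLin with hLdef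
  -- convenient names
  set B : Fin r → Matrix (Fin N) (Fin M) ℂ :=
    fun j => H (((j : ℕ) : Fin 3)) (((j : ℕ) : Fin 3) + 1) with hBdef
  set C : Fin r → Matrix (Fin N) (Fin M) ℂ :=
    fun j => H (((j : ℕ) : Fin 3)) (((j : ℕ) : Fin 3) + 2) with hCdef
  -- entries of A
  have hval : ∀ (j : Fin r) (n : Fin N) (k : Fin (r + 1)) (m : Fin M),
      A (j, n) (k, m) = (if k = j.castSucc then B j n m else 0)
        + (if k = j.succ then C j n m else 0) := by
    intro j n k m
    show (if (k : ℕ) = (j : ℕ) then H (0 + ((j : ℕ) : Fin 3)) (0 + ((j : ℕ) : Fin 3) + 1) n m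
      else if (k : ℕ) = (j : ℕ) + 1 then
        H (0 + ((j : ℕ) : Fin 3)) (0 + ((j : ℕ) : Fin 3) + 2) n m else 0) = _
    have hcsne : j.castSucc ≠ j.succ := ne_of_lt Fin.castSucc_lt_succ
    by_cases h1 : (k : ℕ) = (j : ℕ)
    · have hk : k = j.castSucc := Fin.ext (by simpa using h1)
      subst hk
      simp [h1, hcsne, hBdef, zero_add]
    · by_cases h2 : (k : ℕ) = (j : ℕ) + 1
      · have hk : k = j.succ := Fin.ext (by simpa using h2)
        subst hk
        simp [h1, h2, hcsne.symm, hCdef, zero_add]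
      · have hk1 : k ≠ j.castSucc := fun h => h1 (by simp [h])
        have hk2 : k ≠ j.succ := fun h => h2 (by simp [h])
        simp [h1, h2, hk1, hk2]
  -- action of A on block vectors
  have hAx : ∀ (x : Fin (r + 1) × Fin M → ℂ) (j : Fin r) (n : Fin N),
      A.mulVec x (j, n)
        = (B j).mulVec (fun m => x (j.castSucc, m)) n
          + (C j).mulVec (fun m => x (j.succ, m)) n := by
    intro x j n
    simp only [Matrix.mulVec, dotProduct, Fintype.sum_prod_type]
    rw [Finset.sum_comm]
    simp only [hval, add_mul, ite_mul, zero_mul, Finset.sum_add_distrib,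
      Finset.sum_ite_eq', Finset.mem_univ, if_true]
  -- the block subspaces
  set U' : Fin (r + 1) → Submodule ℂ (Fin M → ℂ) :=
    fun k => U (((k : ℕ) : Fin 3) + 1) with hU'def
  set V' : Fin r → Submodule ℂ (Fin N → ℂ) :=
    fun j => V (((j : ℕ) : Fin 3)) with hV'def
  set e1 := ThreeUserAux.curryLE (Fin (r + 1)) (Fin M) with he1
  set e2 := ThreeUserAux.curryLE (Fin r) (Fin N) with he2
  set X : Submodule ℂ (Fin (r + 1) × Fin M → ℂ) :=
    (Submodule.pi Set.univ U').comap e1.toLinearMap with hXdef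
  set Y : Submodule ℂ (Fin r × Fin N → ℂ) :=
    (Submodule.pi Set.univ V').comap e2.toLinearMap with hYdef
  have hXrank : Module.finrank ℂ X = ∑ k : Fin (r + 1), d (((k : ℕ) : Fin 3) + 1) := by
    rw [hXdef, Submodule.comap_equiv_eq_map_symm, LinearEquiv.finrank_map_eq,
      ThreeUserAux.finrank_piSub]
    exact Finset.sum_congr rfl fun k _ => hU _
  have hYrank : Module.finrank ℂ Y = ∑ j : Fin r, d (((j : ℕ) : Fin 3)) := by
    rw [hYdef, Submodule.comap_equiv_eq_map_symm, LinearEquiv.finrank_map_eq,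
      ThreeUserAux.finrank_piSub]
    exact Finset.sum_congr rfl fun j _ => hV _
  -- key orthogonality
  have hkey : ∀ x ∈ X, ∀ y ∈ Y,
      ∑ p : Fin r × Fin N, (starRingEnd ℂ) (y p) * A.mulVec x p = 0 := by
    intro x hx y hy
    rw [Fintype.sum_prod_type]
    refine Finset.sum_eq_zero fun j _ => ?_
    have hyj : (fun n => y (j, n)) ∈ V (((j : ℕ) : Fin 3)) := hy j (Set.mem_univ j)
    have hx1 : (fun m => x (j.castSucc, m)) ∈ U (((j : ℕ) : Fin 3) + 1) := by
      have h := hx j.castSucc (Set.mem_univ _)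
      simp [hU'def, Fin.coe_castSucc] at h
      exact h
    have hx2 : (fun m => x (j.succ, m)) ∈ U (((j : ℕ) : Fin 3) + 2) := by
      have h := hx j.succ (Set.mem_univ _)
      have hcast : ((j : ℕ) : Fin 3) + 1 + 1 = ((j : ℕ) : Fin 3) + 2 := by rw [add_assoc, one_add_one_eq_two]
      simp [hU'def, Fin.val_succ, add_assoc, one_add_one_eq_two] at h
      exact h
    have hne1 : (((j : ℕ) : Fin 3)) ≠ ((j : ℕ) : Fin 3) + 1 := by
      have h : ∀ a : Fin 3, a ≠ a + 1 := by decide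
      exact h _
    have hne2 : (((j : ℕ) : Fin 3)) ≠ ((j : ℕ) : Fin 3) + 2 := by
      have h : ∀ a : Fin 3, a ≠ a + 2 := by decide
      exact h _
    have h1 := hortho _ _ hne1 _ hx1 _ hyj
    have h2 := hortho _ _ hne2 _ hx2 _ hyj
    have hdp1 : star (fun n => y (j, n)) ⬝ᵥ (B j).mulVec (fun m => x (j.castSucc, m)) = 0 := h1
    have hdp2 : star (fun n => y (j, n)) ⬝ᵥ (C j).mulVec (fun m => x (j.succ, m)) = 0 := h2
    simp only [dotProduct, Pi.star_apply, Complex.star_def] at hdp1 hdp2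
    calc ∑ n, (starRingEnd ℂ) (y (j, n)) * A.mulVec x (j, n)
        = (∑ n, (starRingEnd ℂ) (y (j, n)) * (B j).mulVec (fun m => x (j.castSucc, m)) n)
          + ∑ n, (starRingEnd ℂ) (y (j, n)) * (C j).mulVec (fun m => x (j.succ, m)) n := by
          simp only [hAx, mul_add, Finset.sum_add_distrib]
      _ = 0 := by rw [hdp1, hdp2, add_zero]
  -- move to Euclidean space
  set ε : (Fin r × Fin N → ℂ) ≃ₗ[ℂ] EuclideanSpace ℂ (Fin r × Fin N) :=
    (WithLp.linearEquiv 2 ℂ (Fin r × Fin N → ℂ)).symm with hεdef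
  set Y' : Submodule ℂ (EuclideanSpace ℂ (Fin r × Fin N)) := Y.map ε.toLinearMap with hY'def
  have hsub : (X.map L).map ε.toLinearMap ≤ Y'ᗮ := by
    rintro w hw
    simp only [Submodule.mem_map] at hw
    obtain ⟨w', ⟨x, hx, rfl⟩, rfl⟩ := hw
    rw [Submodule.mem_orthogonal]
    rintro u hu
    simp only [hY'def, Submodule.mem_map] at hu
    obtain ⟨y, hy, rfl⟩ := hu
    rw [PiLp.inner_apply]
    simp only [RCLike.inner_apply]
    exact (Finset.sum_congr rfl fun p _ => mul_comm _ _).trans (hkey x hx y hy)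
  -- dimension bookkeeping
  have hrank1 : Module.finrank ℂ X
      ≤ Module.finrank ℂ (X.map L) + Module.finrank ℂ (LinearMap.ker L) :=
    ThreeUserAux.finrank_le_map_add_ker L X
  have hrank2 : Module.finrank ℂ (X.map L)
      = Module.finrank ℂ ((X.map L).map ε.toLinearMap) :=
    (LinearEquiv.finrank_map_eq ε (X.map L)).symm
  have hrank3 : Module.finrank ℂ ((X.map L).map ε.toLinearMap)
      ≤ Module.finrank ℂ Y'ᗮ := Submodule.finrank_mono hsub
  have hrank4 : Module.finrank ℂ Y' + Module.finrank ℂ Y'ᗮ = r * N := by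
    rw [Submodule.finrank_add_finrank_orthogonal, finrank_euclideanSpace,
      Fintype.card_prod, Fintype.card_fin, Fintype.card_fin]
  have hrank5 : Module.finrank ℂ Y' = Module.finrank ℂ Y :=
    LinearEquiv.finrank_map_eq ε Y
  have hrank6 : A.rank + Module.finrank ℂ (LinearMap.ker L) = (r + 1) * M := by
    have : A.rank = Module.finrank ℂ (LinearMap.range L) := rfl
    rw [this, LinearMap.finrank_range_add_finrank_ker, Module.finrank_pi,
      Fintype.card_prod, Fintype.card_fin, Fintype.card_fin]
  -- sums
  set g : ℕ → ℕ := fun n => d ((n : Fin 3)) with hgdef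
  have hXsum : Module.finrank ℂ X = ∑ i ∈ Finset.range (r + 1), g (i + 1) := by
    rw [hXrank, Fin.sum_univ_eq_sum_range (fun i => d (((i : ℕ) : Fin 3) + 1))]
    refine Finset.sum_congr rfl fun i _ => ?_
    have : ((i + 1 : ℕ) : Fin 3) = ((i : ℕ) : Fin 3) + 1 := by push_cast; ring
    rw [hgdef]
    simp [this]
  have hYsum : Module.finrank ℂ Y = ∑ i ∈ Finset.range r, g i := by
    rw [hYrank, Fin.sum_univ_eq_sum_range (fun i => d (((i : ℕ) : Fin 3)))]
  -- identify the target sum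
  obtain ⟨s, rfl⟩ : ∃ s, r = s + 1 := ⟨r - 1, by omega⟩
  have htarget : d (userIdx 1) + d (userIdx (s + 1 + 1)) + d (userIdx (s + 1 + 2))
      + 2 * ∑ j ∈ Finset.Icc 2 (s + 1), d (userIdx j)
      = Module.finrank ℂ X + Module.finrank ℂ Y := by
    rw [hXsum, hYsum]
    have h0 : d (userIdx 1) = g 0 := rfl
    have h1 : d (userIdx (s + 1 + 1)) = g (s + 1) := by
      simp [userIdx, hgdef]
    have h2 : d (userIdx (s + 1 + 2)) = g (s + 2) := by
      simp [userIdx, hgdef]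
    have h3 : ∑ j ∈ Finset.Icc 2 (s + 1), d (userIdx j)
        = ∑ j ∈ Finset.Icc 2 (s + 1), g (j - 1) := rfl
    rw [h0, h1, h2, h3]
    exact ThreeUserAux.sum_identity g s
  rw [htarget]
  omega
end

section
/- Let d ≥ 1 and N = 2d, and let H i j, for ordered pairs i ≠ j in {1,2,3}, be invertible complex 2d × 2d channel matrices for the 3-user 2d×2d MIMO interference channel. Assume the matrix B = H 1 2 · (H 3 2)⁻¹ · H 3 1 · (H 2 1)⁻¹ · H 2 3 · (H 1 3)⁻¹ has 2d pairwise distinct eigenvalues. Then there exist at least C(2d, d) (the binomial coefficient) pairwise distinct feasible alignment strategies with dimensions (d, d, d), where two strategies are distinct if they differ as tuples of subspaces (U_1,U_2,U_3,V_1,V_2,V_3). -/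
open Matrix

/-- solution count in Proposition 9, `N = 2d`. If all channel
matrices are invertible and `B = H12 H32⁻¹ H31 H21⁻¹ H23 H13⁻¹` (users labelled
`0,1,2`) has `2d` pairwise distinct eigenvalues, then there are at least
`C(2d, d)` pairwise distinct feasible alignment strategies with dimensions
`(d,d,d)`, strategies being tuples `(U₁,U₂,U₃,V₁,V₂,V₃)` of subspaces. -/
theorem three_user_count_solutions
    (d : ℕ) (hd : 1 ≤ d)
    (H : Fin 3 → Fin 3 → Matrix (Fin (2 * d)) (Fin (2 * d)) ℂ)
    (hinv : ∀ i j : Fin 3, i ≠ j → IsUnit (H i j))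
    (B : Matrix (Fin (2 * d)) (Fin (2 * d)) ℂ)
    (hB : B = H 0 1 * (H 2 1)⁻¹ * H 2 0 * (H 1 0)⁻¹ * H 1 2 * (H 0 2)⁻¹)
    (μ : Fin (2 * d) → ℂ) (v : Fin (2 * d) → (Fin (2 * d) → ℂ))
    (hμ : Function.Injective μ)
    (hv : ∀ k, v k ≠ 0 ∧ B.mulVec (v k) = μ k • v k) :
    ∃ S : Finset ((Fin 3 → Submodule ℂ (Fin (2 * d) → ℂ))
        × (Fin 3 → Submodule ℂ (Fin (2 * d) → ℂ))),
      Nat.choose (2 * d) d ≤ S.card ∧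
      ∀ p ∈ S,
        (∀ i, Module.finrank ℂ (p.1 i) = d) ∧
        (∀ i, Module.finrank ℂ (p.2 i) = d) ∧
        (∀ i j, i ≠ j → ∀ u ∈ p.1 j, ∀ w ∈ p.2 i,
          star w ⬝ᵥ (H i j).mulVec u = 0) := by
  classical
  have hdet : ∀ i j : Fin 3, i ≠ j → IsUnit (H i j).det := fun i j h =>
    (Matrix.isUnit_iff_isUnit_det _).mp (hinv i j h)
  have hMI : ∀ i j : Fin 3, i ≠ j → H i j * (H i j)⁻¹ = 1 := fun i j h =>
    Matrix.mul_nonsing_inv _ (hdet i j h)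
  have hIM : ∀ i j : Fin 3, i ≠ j → (H i j)⁻¹ * H i j = 1 := fun i j h =>
    Matrix.nonsing_inv_mul _ (hdet i j h)
  set Q : Matrix (Fin (2 * d)) (Fin (2 * d)) ℂ := (H 1 0)⁻¹ * (H 1 2 * (H 0 2)⁻¹) with hQ
  set A : Fin 3 → Matrix (Fin (2 * d)) (Fin (2 * d)) ℂ :=
    ![Q, (H 2 1)⁻¹ * (H 2 0 * Q), (H 0 2)⁻¹] with hA
  set M : Fin 3 → Matrix (Fin (2 * d)) (Fin (2 * d)) ℂ :=
    ![1, H 1 2 * (H 0 2)⁻¹, H 2 0 * Q] with hM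
  have hAunit : ∀ j, IsUnit (A j) := by
    have h02 : IsUnit (H 0 2)⁻¹ := Matrix.isUnit_nonsing_inv_iff.mpr (hinv 0 2 (by decide))
    have hQu : IsUnit Q :=
      ((Matrix.isUnit_nonsing_inv_iff.mpr (hinv 1 0 (by decide))).mul
        ((hinv 1 2 (by decide)).mul h02))
    intro j
    fin_cases j
    · exact hQu
    · exact (Matrix.isUnit_nonsing_inv_iff.mpr (hinv 2 1 (by decide))).mul
        ((hinv 2 0 (by decide)).mul hQu)
    · exact h02
  have hMunit : ∀ i, IsUnit (M i) := by
    intro i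
    fin_cases i
    · exact isUnit_one
    · exact (hinv 1 2 (by decide)).mul (Matrix.isUnit_nonsing_inv_iff.mpr (hinv 0 2 (by decide)))
    · exact (hinv 2 0 (by decide)).mul (hAunit 0)
  have hker : ∀ C : Matrix (Fin (2 * d)) (Fin (2 * d)) ℂ, IsUnit C →
      LinearMap.ker C.mulVecLin = ⊥ := by
    intro C hC
    rw [LinearMap.ker_eq_bot]
    intro x y hxy
    have h1 : C⁻¹ * C = 1 := Matrix.nonsing_inv_mul _ ((Matrix.isUnit_iff_isUnit_det _).mp hC)
    have := congrArg (fun z => C⁻¹.mulVec z) hxy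
    simpa [Matrix.mulVec_mulVec, h1] using this
  have hli : LinearIndependent ℂ v := by
    apply Module.End.eigenvectors_linearIndependent' (Matrix.mulVecLin B) μ hμ v
    intro k
    refine ⟨Module.End.mem_eigenspace_iff.mpr ?_, (hv k).1⟩
    simpa using (hv k).2
  have hliC : ∀ C : Matrix (Fin (2 * d)) (Fin (2 * d)) ℂ, IsUnit C →
      LinearIndependent ℂ (fun k => C.mulVec (v k)) := by
    intro C hC
    have := hli.map' C.mulVecLin (hker C hC)
    exact this
  set Usp : Matrix (Fin (2 * d)) (Fin (2 * d)) ℂ → Finset (Fin (2 * d)) →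
      Submodule ℂ (Fin (2 * d) → ℂ) :=
    fun C T => Submodule.span ℂ ((fun k => C.mulVec (v k)) '' (T : Set (Fin (2 * d)))) with hUsp
  have hUspRank : ∀ (C : Matrix (Fin (2 * d)) (Fin (2 * d)) ℂ), IsUnit C →
      ∀ T : Finset (Fin (2 * d)), Module.finrank ℂ (Usp C T) = T.card := by
    intro C hC T
    rw [hUsp]
    simp only
    show Module.finrank ℂ (Submodule.span ℂ ((fun k => C.mulVec (v k)) '' (T : Set (Fin (2 * d))))) = T.card
    rw [Set.image_eq_range (fun k => C.mulVec (v k)) (T : Set (Fin (2 * d)))]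
    have hli' : LinearIndependent ℂ
        (fun x : (T : Set (Fin (2 * d))) => C.mulVec (v x)) :=
      (hliC C hC).comp _ Subtype.val_injective
    rw [finrank_span_eq_card hli']
    exact Fintype.card_coe T
  set e : EuclideanSpace ℂ (Fin (2 * d)) ≃ₗ[ℂ] (Fin (2 * d) → ℂ) :=
    WithLp.linearEquiv 2 ℂ (Fin (2 * d) → ℂ) with he
  set F : Finset (Fin (2 * d)) →
      ((Fin 3 → Submodule ℂ (Fin (2 * d) → ℂ)) × (Fin 3 → Submodule ℂ (Fin (2 * d) → ℂ))) :=
    fun T => (fun j => Usp (A j) T,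
      fun i => (((Usp (M i) T).comap e.toLinearMap)ᗮ).map e.toLinearMap) with hF
  refine ⟨(Finset.powersetCard d (Finset.univ : Finset (Fin (2 * d)))).image F, ?_, ?_⟩
  · rw [Finset.card_image_of_injOn, Finset.card_powersetCard, Finset.card_univ, Fintype.card_fin]
    intro T hT T' hT' hFT
    have h0 : Usp (A 0) T = Usp (A 0) T' := congrFun (congrArg Prod.fst hFT) 0
    have hliA := hliC (A 0) (hAunit 0)
    ext k
    constructor
    · intro hk
      by_contra hk'
      have hmem : (A 0).mulVec (v k) ∈ Usp (A 0) T := Submodule.subset_span ⟨k, hk, rfl⟩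
      rw [h0] at hmem
      exact hliA.notMem_span_image (by simpa using hk') hmem
    · intro hk
      by_contra hk'
      have hmem : (A 0).mulVec (v k) ∈ Usp (A 0) T' := Submodule.subset_span ⟨k, hk, rfl⟩
      rw [← h0] at hmem
      exact hliA.notMem_span_image (by simpa using hk') hmem
  · intro p hp
    rw [Finset.mem_image] at hp
    obtain ⟨T, hT, rfl⟩ := hp
    have hTcard : T.card = d := (Finset.mem_powersetCard.mp hT).2
    have hrank2 : ∀ i, Module.finrank ℂ
        ((((Usp (M i) T).comap e.toLinearMap)ᗮ)) = d := by
      intro i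
      have hK : Module.finrank ℂ ((Usp (M i) T).comap e.toLinearMap) = d := by
        rw [Submodule.comap_equiv_eq_map_symm]
        rw [LinearEquiv.finrank_map_eq]
        rw [hUspRank (M i) (hMunit i) T, hTcard]
      have := Submodule.finrank_add_finrank_orthogonal ((Usp (M i) T).comap e.toLinearMap)
      rw [hK, finrank_euclideanSpace_fin] at this
      omega
    refine ⟨?_, ?_, ?_⟩
    · intro j
      simpa [hF, hTcard] using hUspRank (A j) (hAunit j) T
    · intro i
      show Module.finrank ℂ ((((Usp (M i) T).comap e.toLinearMap)ᗮ).map e.toLinearMap) = d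
      rw [LinearEquiv.finrank_map_eq]
      exact hrank2 i
    · have hgen : ∀ (i j : Fin 3), i ≠ j → ∀ k ∈ T,
          (H i j * A j).mulVec (v k) ∈ Usp (M i) T := by
        intro i j hij k hk
        fin_cases i <;> fin_cases j <;> first
          | exact absurd rfl hij
          | skip
        · show (H 0 1 * A 1).mulVec (v k) ∈ Usp (M 0) T
          have hmat : H 0 1 * A 1 = B := by
            show H 0 1 * ((H 2 1)⁻¹ * (H 2 0 * Q)) = B
            rw [hB, hQ]
            noncomm_ring
          rw [hmat, (hv k).2]
          have : v k ∈ Usp (M 0) T := Submodule.subset_span ⟨k, hk, by simp [hM]⟩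
          exact Submodule.smul_mem _ _ this
        · show (H 0 2 * A 2).mulVec (v k) ∈ Usp (M 0) T
          have hmat : H 0 2 * A 2 = 1 := by
            show H 0 2 * (H 0 2)⁻¹ = 1
            exact hMI 0 2 (by decide)
          rw [hmat]
          exact Submodule.subset_span ⟨k, hk, by simp [hM]⟩
        · show (H 1 0 * A 0).mulVec (v k) ∈ Usp (M 1) T
          have hmat : H 1 0 * A 0 = M 1 := by
            show H 1 0 * ((H 1 0)⁻¹ * (H 1 2 * (H 0 2)⁻¹)) = M 1
            rw [← Matrix.mul_assoc, hMI 1 0 (by decide), one_mul]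
            simp [hM]
          rw [hmat]
          exact Submodule.subset_span ⟨k, hk, rfl⟩
        · show (H 1 2 * A 2).mulVec (v k) ∈ Usp (M 1) T
          have hmat : H 1 2 * A 2 = M 1 := by simp [hA, hM]
          rw [hmat]
          exact Submodule.subset_span ⟨k, hk, rfl⟩
        · show (H 2 0 * A 0).mulVec (v k) ∈ Usp (M 2) T
          have hmat : H 2 0 * A 0 = M 2 := by simp [hA, hM]
          rw [hmat]
          exact Submodule.subset_span ⟨k, hk, rfl⟩
        · show (H 2 1 * A 1).mulVec (v k) ∈ Usp (M 2) T
          have hmat : H 2 1 * A 1 = M 2 := by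
            show H 2 1 * ((H 2 1)⁻¹ * (H 2 0 * Q)) = M 2
            rw [← Matrix.mul_assoc, hMI 2 1 (by decide), one_mul]
            simp [hM]
          rw [hmat]
          exact Submodule.subset_span ⟨k, hk, rfl⟩
      intro i j hij u hu w hw
      have hHu : (H i j).mulVec u ∈ Usp (M i) T := by
        have hmap : Submodule.map (H i j).mulVecLin (Usp (A j) T) ≤ Usp (M i) T := by
          rw [hUsp]
          simp only
          rw [Submodule.map_span, ← Set.image_comp]
          apply Submodule.span_le.mpr
          rintro _ ⟨k, hk, rfl⟩
          simpa [Function.comp, Matrix.mulVec_mulVec] using hgen i j hij k hk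
        exact hmap ⟨u, hu, rfl⟩
      simp only [hF, Submodule.mem_map] at hw
      obtain ⟨x, hx, rfl⟩ := hw
      have hy : e.symm ((H i j).mulVec u) ∈ (Usp (M i) T).comap e.toLinearMap := by
        simp only [Submodule.mem_comap, LinearEquiv.coe_coe, LinearEquiv.apply_symm_apply]
        exact hHu
      have h0 := (Submodule.mem_orthogonal' _ _).mp hx _ hy
      rw [PiLp.inner_apply] at h0
      simpa [dotProduct, Pi.star_apply, Complex.star_def, he, WithLp.linearEquiv, RCLike.inner_apply,
        mul_comm] using h0
end

section
/- Let r ≥ 1 and M ≤ N be natural numbers. Let B be the N × M complex matrix consisting of the M × M identity matrix stacked above an (N−M) × M zero block, and let C be the N × M complex matrix consisting of an (N−M) × M zero block stacked above the M × M identity matrix. Then the rN × (r+1)M block matrix A_r associated to B1 = ⋯ = Br = B and C1 = ⋯ = Cr = C has rank min(rN, (r+1)M). -/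
open Matrix

/-- The `N × M` matrix (`M ≤ N`) consisting of the `M × M` identity stacked
above an `(N-M) × M` zero block. -/
def idTop (N M : ℕ) : Matrix (Fin N) (Fin M) ℂ :=
  Matrix.of fun i j => if (i : ℕ) = (j : ℕ) then 1 else 0

/-- The `N × M` matrix (`M ≤ N`) consisting of an `(N-M) × M` zero block stacked
above the `M × M` identity. -/
def idBottom (N M : ℕ) : Matrix (Fin N) (Fin M) ℂ :=
  Matrix.of fun i j => if (i : ℕ) = (j : ℕ) + (N - M) then 1 else 0

namespace SpecAux

lemma sum_ite_fin {n : ℕ} (c : ℕ) (f : Fin n → ℂ) :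
    ∑ j : Fin n, (if c = (j : ℕ) then f j else 0) = if h : c < n then f ⟨c, h⟩ else 0 := by
  by_cases h : c < n
  · rw [dif_pos h, Finset.sum_eq_single (⟨c, h⟩ : Fin n)]
    · simp
    · intro b _ hb
      rw [if_neg]
      exact fun hc => hb (Fin.ext hc.symm)
    · simp
  · rw [dif_neg h, Finset.sum_eq_zero]
    intro j _
    rw [if_neg]
    exact fun hc => h (hc ▸ j.isLt)

lemma sum_ite_fin_succ {n : ℕ} (c : ℕ) (f : Fin n → ℂ) :
    ∑ j : Fin n, (if c = (j : ℕ) + 1 then f j else 0)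
      = if h : 1 ≤ c ∧ c - 1 < n then f ⟨c - 1, h.2⟩ else 0 := by
  cases c with
  | zero => simp
  | succ m =>
    have h1 : ∀ j : Fin n, (if m + 1 = (j : ℕ) + 1 then f j else 0)
        = (if m = (j : ℕ) then f j else 0) := by
      intro j; simp
    rw [Finset.sum_congr rfl fun j _ => h1 j, sum_ite_fin]
    by_cases h : m < n <;> simp [h]

section

variable {r N M : ℕ}

/-- Abbreviation for the specialized matrix. -/
noncomputable def A (r N M : ℕ) : Matrix (Fin r × Fin N) (Fin (r + 1) × Fin M) ℂ :=
  alignBlock (fun _ : Fin r => idTop N M) (fun _ : Fin r => idBottom N M)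

lemma A_apply (p : Fin r × Fin N) (q : Fin (r + 1) × Fin M) :
    A r N M p q =
      (if (q.1 : ℕ) = (p.1 : ℕ) then (if (p.2 : ℕ) = (q.2 : ℕ) then 1 else 0) else 0)
      + (if (q.1 : ℕ) = (p.1 : ℕ) + 1 then
          (if (p.2 : ℕ) = (q.2 : ℕ) + (N - M) then 1 else 0) else 0) := by
  simp only [A, alignBlock, idTop, idBottom, Matrix.of_apply]
  by_cases h1 : (q.1 : ℕ) = (p.1 : ℕ)
  · have h2 : ¬ (q.1 : ℕ) = (p.1 : ℕ) + 1 := by omega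
    simp [h1, h2]
  · by_cases h2 : (q.1 : ℕ) = (p.1 : ℕ) + 1 <;> simp [h1, h2]

/-- Column equations for an element of the left kernel. -/
lemma colEq (hMN : M ≤ N) (x : Fin r × Fin N → ℂ)
    (hx : ∀ q : Fin (r + 1) × Fin M, ∑ p : Fin r × Fin N, x p * A r N M p q = 0)
    (k : ℕ) (hk : k < r + 1) (l : ℕ) (hl : l < M) :
    (if h : k < r then x (⟨k, h⟩, ⟨l, hl.trans_le hMN⟩) else 0)
      + (if h : 1 ≤ k then x (⟨k - 1, by omega⟩, ⟨l + (N - M), by omega⟩) else 0) = 0 := by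
  have h0 := hx (⟨k, hk⟩, ⟨l, hl⟩)
  rw [Fintype.sum_prod_type] at h0
  have hterm : ∀ (j : Fin r) (i : Fin N),
      x (j, i) * A r N M (j, i) (⟨k, hk⟩, ⟨l, hl⟩)
        = (if k = (j : ℕ) then (if (i : ℕ) = l then x (j, i) else 0) else 0)
          + (if k = (j : ℕ) + 1 then (if (i : ℕ) = l + (N - M) then x (j, i) else 0) else 0) := by
    intro j i
    rw [A_apply]
    simp only [mul_add, mul_ite, mul_one, mul_zero]
  simp only [hterm, Finset.sum_add_distrib] at h0
  have hs1 : ∀ j : Fin r,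
      ∑ i : Fin N, (if k = (j : ℕ) then (if (i : ℕ) = l then x (j, i) else 0) else 0)
        = (if k = (j : ℕ) then x (j, ⟨l, hl.trans_le hMN⟩) else 0) := by
    intro j
    by_cases h : k = (j : ℕ)
    · simp only [if_pos h]
      have : ∀ i : Fin N, (if (i : ℕ) = l then x (j, i) else 0)
          = (if l = (i : ℕ) then x (j, i) else 0) := by
        intro i; simp [eq_comm]
      rw [Finset.sum_congr rfl fun i _ => this i, sum_ite_fin, dif_pos (hl.trans_le hMN)]
    · simp [h]
  have hs2 : ∀ j : Fin r,
      ∑ i : Fin N, (if k = (j : ℕ) + 1 then (if (i : ℕ) = l + (N - M) then x (j, i) else 0) else 0)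
        = (if k = (j : ℕ) + 1 then x (j, ⟨l + (N - M), by omega⟩) else 0) := by
    intro j
    by_cases h : k = (j : ℕ) + 1
    · simp only [if_pos h]
      have : ∀ i : Fin N, (if (i : ℕ) = l + (N - M) then x (j, i) else 0)
          = (if l + (N - M) = (i : ℕ) then x (j, i) else 0) := by
        intro i; simp [eq_comm]
      rw [Finset.sum_congr rfl fun i _ => this i, sum_ite_fin,
        dif_pos (show l + (N - M) < N by omega)]
    · simp [h]
  rw [Finset.sum_congr rfl fun j _ => hs1 j, Finset.sum_congr rfl fun j _ => hs2 j,
    sum_ite_fin, sum_ite_fin_succ] at h0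
  by_cases h1 : k < r <;> by_cases h2 : 1 ≤ k
  · have h3 : 1 ≤ k ∧ k - 1 < r := ⟨h2, by omega⟩
    rw [dif_pos h1, dif_pos h2]
    rw [dif_pos h1, dif_pos h3] at h0
    exact h0
  · have h3 : ¬ (1 ≤ k ∧ k - 1 < r) := by omega
    rw [dif_pos h1, dif_neg h2]
    rw [dif_pos h1, dif_neg h3] at h0
    exact h0
  · have h3 : 1 ≤ k ∧ k - 1 < r := ⟨h2, by omega⟩
    rw [dif_neg h1, dif_pos h2]
    rw [dif_neg h1, dif_pos h3] at h0
    simpa using h0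
  · rw [dif_neg h1, dif_neg h2, add_zero]

/-- Row equations for an element of the right kernel. -/
lemma rowEq (hMN : M ≤ N) (y : Fin (r + 1) × Fin M → ℂ)
    (hy : ∀ p : Fin r × Fin N, ∑ q : Fin (r + 1) × Fin M, A r N M p q * y q = 0)
    (j : ℕ) (hj : j < r) (i : ℕ) (hi : i < N) :
    (if h : i < M then y (⟨j, by omega⟩, ⟨i, h⟩) else 0)
      + (if h : N - M ≤ i then y (⟨j + 1, by omega⟩, ⟨i - (N - M), by omega⟩) else 0) = 0 := by
  have h0 := hy (⟨j, hj⟩, ⟨i, hi⟩)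
  rw [Fintype.sum_prod_type] at h0
  have hterm : ∀ (k : Fin (r + 1)) (l : Fin M),
      A r N M (⟨j, hj⟩, ⟨i, hi⟩) (k, l) * y (k, l)
        = (if (k : ℕ) = j then (if i = (l : ℕ) then y (k, l) else 0) else 0)
          + (if (k : ℕ) = j + 1 then (if i = (l : ℕ) + (N - M) then y (k, l) else 0) else 0) := by
    intro k l
    rw [A_apply]
    simp only [add_mul, ite_mul, one_mul, zero_mul]
  simp only [hterm, Finset.sum_add_distrib] at h0
  have hs1 : ∀ k : Fin (r + 1),
      ∑ l : Fin M, (if (k : ℕ) = j then (if i = (l : ℕ) then y (k, l) else 0) else 0)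
        = (if (k : ℕ) = j then (if h : i < M then y (k, ⟨i, h⟩) else 0) else 0) := by
    intro k
    by_cases h : (k : ℕ) = j
    · simp only [if_pos h]
      rw [sum_ite_fin]
    · simp [h]
  have hs2 : ∀ k : Fin (r + 1),
      ∑ l : Fin M, (if (k : ℕ) = j + 1 then (if i = (l : ℕ) + (N - M) then y (k, l) else 0) else 0)
        = (if (k : ℕ) = j + 1 then
            (if h : N - M ≤ i then y (k, ⟨i - (N - M), by omega⟩) else 0) else 0) := by
    intro k
    by_cases h : (k : ℕ) = j + 1
    · simp only [if_pos h]
      have : ∀ l : Fin M, (if i = (l : ℕ) + (N - M) then y (k, l) else 0)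
          = (if i - (N - M) = (l : ℕ) ∧ N - M ≤ i then y (k, l) else 0) := by
        intro l
        congr 1
        simp only [eq_iff_iff]
        omega
      rw [Finset.sum_congr rfl fun l _ => this l]
      by_cases hd : N - M ≤ i
      · have : ∀ l : Fin M, (if i - (N - M) = (l : ℕ) ∧ N - M ≤ i then y (k, l) else 0)
            = (if i - (N - M) = (l : ℕ) then y (k, l) else 0) := by
          intro l; simp [hd]
        rw [Finset.sum_congr rfl fun l _ => this l, sum_ite_fin,
          dif_pos (show i - (N - M) < M by omega), dif_pos hd]
      · simp [hd]
    · simp [h]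
  rw [Finset.sum_congr rfl fun k _ => hs1 k, Finset.sum_congr rfl fun k _ => hs2 k] at h0
  -- now sum over k of (if (k:ℕ) = j then c1 else 0) etc.
  have e1 : ∀ k : Fin (r + 1), (if (k : ℕ) = j then (if h : i < M then y (k, ⟨i, h⟩) else 0) else 0)
      = (if j = (k : ℕ) then (if h : i < M then y (k, ⟨i, h⟩) else 0) else 0) := by
    intro k; simp [eq_comm]
  have e2 : ∀ k : Fin (r + 1), (if (k : ℕ) = j + 1 then
        (if h : N - M ≤ i then y (k, ⟨i - (N - M), by omega⟩) else 0) else 0)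
      = (if j + 1 = (k : ℕ) then
        (if h : N - M ≤ i then y (k, ⟨i - (N - M), by omega⟩) else 0) else 0) := by
    intro k; simp [eq_comm]
  rw [Finset.sum_congr rfl fun k _ => e1 k, Finset.sum_congr rfl fun k _ => e2 k,
    sum_ite_fin, sum_ite_fin, dif_pos (show j < r + 1 by omega),
    dif_pos (show j + 1 < r + 1 by omega)] at h0
  exact h0

end

end SpecAux


namespace SpecAux

lemma left_kernel (r N M : ℕ) (hr : 1 ≤ r) (hMN : M ≤ N) (hrd : r * (N - M) ≤ M)
    (x : Fin r × Fin N → ℂ)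
    (hx : ∀ q : Fin (r + 1) × Fin M, ∑ p : Fin r × Fin N, x p * A r N M p q = 0) :
    x = 0 := by
  have key := colEq (r := r) hMN x hx
  -- upward propagation along chains anchored at the bottom
  have up : ∀ j : ℕ, ∀ (hj : j < r) (i : ℕ) (hi : i < N), i + j * (N - M) < M →
      x (⟨j, hj⟩, ⟨i, hi⟩) = 0 := by
    intro j
    induction j with
    | zero =>
      intro hj i hi hc
      rw [Nat.zero_mul, Nat.add_zero] at hc
      have h0 := key 0 (by omega) i hc
      rw [dif_pos (show (0:ℕ) < r by omega), dif_neg (by omega)] at h0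
      simpa using h0
    | succ j ih =>
      intro hj i hi hc
      have hsm : (j + 1) * (N - M) = j * (N - M) + (N - M) := Nat.succ_mul j (N - M)
      have hiM : i < M := by
        have := Nat.le_add_right i ((j + 1) * (N - M))
        omega
      have h0 := key (j + 1) (by omega) i hiM
      rw [dif_pos hj, dif_pos (by omega : 1 ≤ j + 1)] at h0
      have hprev : x (⟨j + 1 - 1, by omega⟩, ⟨i + (N - M), by omega⟩) = 0 := by
        have e1 : (⟨j + 1 - 1, by omega⟩ : Fin r) = ⟨j, by omega⟩ := by
          apply Fin.ext; simp
        rw [e1]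
        exact ih (by omega) (i + (N - M)) (by omega) (by omega)
      rw [hprev, add_zero] at h0
      exact h0
  -- downward propagation along chains anchored at the top
  have down : ∀ t : ℕ, ∀ (j i : ℕ) (hj : j < r) (hi : i < N), j + t + 1 = r →
      M ≤ i + j * (N - M) → x (⟨j, hj⟩, ⟨i, hi⟩) = 0 := by
    intro t
    induction t with
    | zero =>
      intro j i hj hi hjt hc
      have hsm : (j + 1) * (N - M) = j * (N - M) + (N - M) := Nat.succ_mul j (N - M)
      have hrj : r * (N - M) = (j + 1) * (N - M) := by rw [show j + 1 = r by omega]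
      have hdi : N - M ≤ i := by omega
      have h0 := key (j + 1) (by omega) (i - (N - M)) (by omega)
      rw [dif_neg (show ¬ j + 1 < r by omega), dif_pos (by omega : 1 ≤ j + 1),
        zero_add] at h0
      have e1 : (⟨j + 1 - 1, by omega⟩ : Fin r) = ⟨j, hj⟩ := by apply Fin.ext; simp
      have e2 : (⟨i - (N - M) + (N - M), by omega⟩ : Fin N) = ⟨i, hi⟩ := by
        apply Fin.ext; simp; omega
      rw [e1, e2] at h0
      exact h0
    | succ t ih =>
      intro j i hj hi hjt hc
      have hsm : (j + 1) * (N - M) = j * (N - M) + (N - M) := Nat.succ_mul j (N - M)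
      have hmul : (j + 2) * (N - M) ≤ r * (N - M) :=
        Nat.mul_le_mul_right (N - M) (by omega)
      have hsm2 : (j + 2) * (N - M) = j * (N - M) + (N - M) + (N - M) :=
        by rw [show j + 2 = (j + 1) + 1 from rfl, Nat.succ_mul, hsm]
      have hdi : N - M ≤ i := by omega
      have h0 := key (j + 1) (by omega) (i - (N - M)) (by omega)
      rw [dif_pos (show j + 1 < r by omega), dif_pos (by omega : 1 ≤ j + 1)] at h0
      have e1 : (⟨j + 1 - 1, by omega⟩ : Fin r) = ⟨j, hj⟩ := by apply Fin.ext; simp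
      have e2 : (⟨i - (N - M) + (N - M), by omega⟩ : Fin N) = ⟨i, hi⟩ := by
        apply Fin.ext; simp; omega
      rw [e1, e2] at h0
      have hfirst : x (⟨j + 1, by omega⟩, ⟨i - (N - M), by omega⟩) = 0 := by
        apply ih (j + 1) (i - (N - M)) (by omega) (by omega) (by omega)
        omega
      rw [hfirst, zero_add] at h0
      exact h0
  funext p
  obtain ⟨⟨j, hj⟩, ⟨i, hi⟩⟩ := p
  by_cases hc : i + j * (N - M) < M
  · exact up j hj i hi hc
  · exact down (r - 1 - j) j i hj hi (by omega) (by omega)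

lemma right_kernel (r N M : ℕ) (hr : 1 ≤ r) (hMN : M ≤ N) (hrd : M ≤ r * (N - M))
    (y : Fin (r + 1) × Fin M → ℂ)
    (hy : ∀ p : Fin r × Fin N, ∑ q : Fin (r + 1) × Fin M, A r N M p q * y q = 0) :
    y = 0 := by
  have key := rowEq (r := r) hMN y hy
  have hd0 : ∀ l : ℕ, l < M → 0 < N - M := by
    intro l hl
    rcases Nat.eq_zero_or_pos (N - M) with h | h
    · rw [h, Nat.mul_zero] at hrd; omega
    · exact h
  -- chains anchored at the top (small invariant)
  have upA : ∀ l : ℕ, ∀ (k : ℕ) (hk : k < r + 1) (hl : l < M), l + k * (N - M) < M →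
      y (⟨k, hk⟩, ⟨l, hl⟩) = 0 := by
    intro l
    induction l using Nat.strong_induction_on with
    | _ l ih =>
      intro k hk hl hc
      have hkr : k < r := by
        have h1 : k * (N - M) < r * (N - M) := by
          have := Nat.le_add_left (k * (N - M)) l
          omega
        exact lt_of_mul_lt_mul_right h1 (Nat.zero_le _)
      by_cases hld : N - M ≤ l
      · have h0 := key k hkr l (by omega)
        rw [dif_pos hl, dif_pos hld] at h0
        have hsm : (k + 1) * (N - M) = k * (N - M) + (N - M) := Nat.succ_mul k (N - M)
        have hfirst : y (⟨k + 1, by omega⟩, ⟨l - (N - M), by omega⟩) = 0 := by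
          apply ih (l - (N - M)) (by have := hd0 l hl; omega) (k + 1) (by omega) (by omega)
          omega
        rw [hfirst, add_zero] at h0
        exact h0
      · have h0 := key k hkr l (by omega)
        rw [dif_pos hl, dif_neg hld, add_zero] at h0
        exact h0
  -- chains anchored at the bottom (large invariant)
  have downB : ∀ k : ℕ, ∀ (l : ℕ) (hk : k < r + 1) (hl : l < M), M ≤ l + k * (N - M) →
      y (⟨k, hk⟩, ⟨l, hl⟩) = 0 := by
    intro k
    induction k with
    | zero =>
      intro l hk hl hc
      rw [Nat.zero_mul, Nat.add_zero] at hc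
      omega
    | succ k ih =>
      intro l hk hl hc
      have hsm : (k + 1) * (N - M) = k * (N - M) + (N - M) := Nat.succ_mul k (N - M)
      have h0 := key k (by omega) (l + (N - M)) (by omega)
      by_cases hMd : M ≤ l + (N - M)
      · rw [dif_neg (by omega), dif_pos (by omega : N - M ≤ l + (N - M)), zero_add] at h0
        have e2 : (⟨l + (N - M) - (N - M), by omega⟩ : Fin M) = ⟨l, hl⟩ := by
          apply Fin.ext; simp
        rw [e2] at h0
        exact h0
      · rw [dif_pos (show l + (N - M) < M by omega),
          dif_pos (by omega : N - M ≤ l + (N - M))] at h0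
        have e2 : (⟨l + (N - M) - (N - M), by omega⟩ : Fin M) = ⟨l, hl⟩ := by
          apply Fin.ext; simp
        rw [e2] at h0
        have hfirst : y (⟨k, by omega⟩, ⟨l + (N - M), by omega⟩) = 0 := by
          apply ih (l + (N - M)) (by omega) (by omega)
          omega
        rw [hfirst, zero_add] at h0
        exact h0
  funext q
  obtain ⟨⟨k, hk⟩, ⟨l, hl⟩⟩ := q
  by_cases hc : l + k * (N - M) < M
  · exact upA l k hk hl hc
  · exact downB k l hk hl (by omega)

end SpecAux

/-- specialization in the proof of Lemma 11. For `M ≤ N`, the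
block matrix `A_r` built with `B_j = idTop` and `C_j = idBottom` for all `j` has
full rank `min (rN) ((r+1)M)`. -/
theorem specialized_alignBlock_full_rank
    (r N M : ℕ) (hr : 1 ≤ r) (hMN : M ≤ N) :
    (alignBlock (fun _ : Fin r => idTop N M) (fun _ : Fin r => idBottom N M)).rank
      = min (r * N) ((r + 1) * M) := by
  have hN : N = M + (N - M) := by omega
  rcases le_total (r * N) ((r + 1) * M) with h | h
  · -- rows linearly independent
    have hrd : r * (N - M) ≤ M := by
      rw [hN, Nat.mul_add, Nat.add_mul, Nat.one_mul] at h
      exact Nat.le_of_add_le_add_left h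
    rw [min_eq_left h]
    rw [show (alignBlock (fun _ : Fin r => idTop N M) (fun _ : Fin r => idBottom N M))
        = SpecAux.A r N M from rfl]
    rw [← Matrix.rank_transpose, Matrix.rank,
      LinearMap.finrank_range_of_inj, Module.finrank_fintype_fun_eq_card,
      Fintype.card_prod, Fintype.card_fin, Fintype.card_fin]
    rw [← LinearMap.ker_eq_bot, LinearMap.ker_eq_bot']
    intro x hx0
    apply SpecAux.left_kernel r N M hr hMN hrd
    intro q
    have := congrFun hx0 q
    simpa [Matrix.mulVecLin_apply, Matrix.mulVec, dotProduct, Matrix.vecMul,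
      Matrix.transpose_apply, mul_comm] using this
  · -- columns linearly independent
    have hrd : M ≤ r * (N - M) := by
      rw [hN, Nat.mul_add, Nat.add_mul, Nat.one_mul] at h
      exact Nat.le_of_add_le_add_left h
    rw [min_eq_right h]
    rw [show (alignBlock (fun _ : Fin r => idTop N M) (fun _ : Fin r => idBottom N M))
        = SpecAux.A r N M from rfl]
    rw [Matrix.rank, LinearMap.finrank_range_of_inj, Module.finrank_fintype_fun_eq_card,
      Fintype.card_prod, Fintype.card_fin, Fintype.card_fin]
    rw [← LinearMap.ker_eq_bot, LinearMap.ker_eq_bot']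
    intro y hy0
    apply SpecAux.right_kernel r N M hr hMN hrd
    intro p
    have := congrFun hy0 p
    simpa [Matrix.mulVecLin_apply, Matrix.mulVec, dotProduct] using this
end

section
/- Let K ≥ 1 and, for 1 ≤ i ≤ K, let M_i, N_i, d_i be natural numbers with d_i ≤ min(M_i, N_i). For each i, let U_i ⊆ ℂ^{M_i} and V_i ⊆ ℂ^{N_i} be ℂ-subspaces with dim U_i = dim V_i = d_i. Then the set of channel-matrix tuples (H_{ij})_{i ≠ j}, where H_{ij} ∈ Matrix (Fin N_i) (Fin M_j) ℂ, such that for all i ≠ j, all u ∈ U_j and all v ∈ V_i the standard Hermitian inner product of v with H_{ij}·u is zero, is a ℂ-linear subspace of the product space ∏_{i ≠ j} Matrix (Fin N_i) (Fin M_j) ℂ of dimension ∑_{i ≠ j} (N_i·M_j − d_i·d_j). -/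
open Matrix

/-- Auxiliary lemma: the single-pair case. -/
theorem aux_channel_pair (m n a b : ℕ)
    (U : Submodule ℂ (Fin m → ℂ)) (V : Submodule ℂ (Fin n → ℂ))
    (hU : Module.finrank ℂ U = a) (hV : Module.finrank ℂ V = b) :
    ∃ W : Submodule ℂ (Matrix (Fin n) (Fin m) ℂ),
      (∀ H, H ∈ W ↔ ∀ u ∈ U, ∀ v ∈ V, star v ⬝ᵥ H.mulVec u = 0) ∧
      Module.finrank ℂ W = n * m - b * a := by
  classical
  let bU : Module.Basis (Fin a) ℂ U := Module.finBasisOfFinrankEq ℂ U hU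
  let bV : Module.Basis (Fin b) ℂ V := Module.finBasisOfFinrankEq ℂ V hV
  set c : Fin b → (Fin n → ℂ) := fun i => star ((bV i : Fin n → ℂ)) with hc
  -- spans
  have hUspan : Submodule.span ℂ (Set.range fun j => ((bU j : Fin m → ℂ))) = U := by
    conv_rhs => rw [← Submodule.map_subtype_top U, ← bU.span_eq]
    rw [Submodule.map_span, ← Set.range_comp]
    rfl
  have hVspan : Submodule.span ℂ (Set.range fun i => ((bV i : Fin n → ℂ))) = V := by
    conv_rhs => rw [← Submodule.map_subtype_top V, ← bV.span_eq]
    rw [Submodule.map_span, ← Set.range_comp]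
    rfl
  -- the linear map
  let Φ : Matrix (Fin n) (Fin m) ℂ →ₗ[ℂ] Matrix (Fin b) (Fin a) ℂ :=
    { toFun := fun H => Matrix.of fun i j => c i ⬝ᵥ H.mulVec ((bU j : Fin m → ℂ))
      map_add' := by
        intro H1 H2
        ext i j
        simp [Matrix.add_mulVec, dotProduct_add]
      map_smul' := by
        intro s H
        ext i j
        simp [Matrix.smul_mulVec, dotProduct_smul] }
  have hΦapp : ∀ H i j, Φ H i j = c i ⬝ᵥ H.mulVec ((bU j : Fin m → ℂ)) := fun _ _ _ => rfl
  -- kernel description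
  have hker : ∀ H : Matrix (Fin n) (Fin m) ℂ,
      H ∈ LinearMap.ker Φ ↔ ∀ u ∈ U, ∀ v ∈ V, star v ⬝ᵥ H.mulVec u = 0 := by
    intro H
    constructor
    · intro h u hu v hv
      have h0 : ∀ i j, c i ⬝ᵥ H.mulVec ((bU j : Fin m → ℂ)) = 0 := by
        intro i j
        have h' : Φ H = 0 := LinearMap.mem_ker.mp h
        have := congrFun (congrFun h' i) j
        simpa [hΦapp] using this
      have h1 : ∀ w ∈ Submodule.span ℂ (Set.range fun j => ((bU j : Fin m → ℂ))),
          ∀ i, c i ⬝ᵥ H.mulVec w = 0 := by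
        intro w hw
        induction hw using Submodule.span_induction with
        | mem x hx => intro i; obtain ⟨j, rfl⟩ := hx; exact h0 i j
        | zero => intro i; simp
        | add x y _ _ hx hy => intro i; simp [Matrix.mulVec_add, dotProduct_add, hx i, hy i]
        | smul s x _ hx => intro i; simp [Matrix.mulVec_smul, dotProduct_smul, hx i]
      have h1u : ∀ i, c i ⬝ᵥ H.mulVec u = 0 := by
        have hu' : u ∈ Submodule.span ℂ (Set.range fun j => ((bU j : Fin m → ℂ))) := by
          rw [hUspan]; exact hu
        exact h1 u hu'
      have h2 : ∀ w ∈ Submodule.span ℂ (Set.range fun i => ((bV i : Fin n → ℂ))),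
          star w ⬝ᵥ H.mulVec u = 0 := by
        intro w hw
        induction hw using Submodule.span_induction with
        | mem x hx => obtain ⟨i, rfl⟩ := hx; exact h1u i
        | zero => simp
        | add x y _ _ hx hy => simp [star_add, add_dotProduct, hx, hy]
        | smul s x _ hx => simp [star_smul, smul_dotProduct, hx]
      have hv' : v ∈ Submodule.span ℂ (Set.range fun i => ((bV i : Fin n → ℂ))) := by
        rw [hVspan]; exact hv
      exact h2 v hv'
    · intro h
      rw [LinearMap.mem_ker]
      ext i j
      simpa [hΦapp] using h (bU j) (bU j).2 (bV i) (bV i).2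
  -- the pairing map on the V side
  let L2 : (Fin n → ℂ) →ₗ[ℂ] (Fin b → ℂ) :=
    { toFun := fun w i => c i ⬝ᵥ w
      map_add' := by intro x y; funext i; simp [dotProduct_add]
      map_smul' := by intro s x; funext i; simp [dotProduct_smul] }
  have hL2app : ∀ w i, L2 w i = c i ⬝ᵥ w := fun _ _ => rfl
  -- linear independence of c
  have hbVind : LinearIndependent ℂ (fun i => ((bV i : Fin n → ℂ))) :=
    bV.linearIndependent.map' V.subtype V.ker_subtype
  have hcind : ∀ g : Fin b → ℂ, (∑ i, g i • c i) = 0 → ∀ i, g i = 0 := by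
    intro g hg i
    have hstar : (∑ i, star (g i) • ((bV i : Fin n → ℂ))) = 0 := by
      have := congrArg star hg
      simpa [star_sum, star_smul, hc] using this
    have := Fintype.linearIndependent_iff.mp hbVind (fun i => star (g i)) hstar i
    simpa using congrArg star this
  -- surjectivity of L2
  have hL2surj : Function.Surjective L2 := by
    rw [← LinearMap.range_eq_top]
    by_contra hne
    have hlt : LinearMap.range L2 < ⊤ := lt_top_iff_ne_top.mpr hne
    obtain ⟨f, hf0, hf⟩ :=
      Submodule.exists_dual_map_eq_bot_of_lt_top hlt inferInstance
    set av : Fin b → ℂ := fun i => f fun j => if i = j then 1 else 0 with hav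
    have hfz : ∀ w, f (L2 w) = 0 := by
      intro w
      have : f (L2 w) ∈ Submodule.map f (LinearMap.range L2) :=
        Submodule.mem_map_of_mem (LinearMap.mem_range_self L2 w)
      rw [hf] at this
      simpa using this
    have hfsum : ∀ y : Fin b → ℂ, f y = ∑ i, y i * av i := by
      intro y
      rw [LinearMap.pi_apply_eq_sum_univ]
      simp [hav, smul_eq_mul]
    have hv00 : (∑ i, av i • c i) = 0 := by
      funext j
      have h := hfz (Pi.single j 1)
      rw [hfsum] at h
      have hL : ∀ i, L2 (Pi.single j 1) i = c i j := by
        intro i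
        rw [hL2app]
        simp [dotProduct_single]
      simp only [hL] at h
      simp only [Finset.sum_apply, Pi.smul_apply, smul_eq_mul, Pi.zero_apply]
      rw [Finset.sum_congr rfl fun i _ => mul_comm (av i) (c i j)]
      exact h
    have hav0 : ∀ i, av i = 0 := hcind av hv00
    exact hf0 (LinearMap.ext fun y => by rw [hfsum]; simp [hav0])
  -- surjectivity of Φ
  have hΦsurj : Function.Surjective Φ := by
    let L1 : (Fin a → ℂ) →ₗ[ℂ] (Fin m → ℂ) :=
      U.subtype ∘ₗ (bU.equivFun.symm : (Fin a → ℂ) ≃ₗ[ℂ] U).toLinearMap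
    have hL1inj : LinearMap.ker L1 = ⊥ := by
      rw [LinearMap.ker_eq_bot]
      exact Subtype.coe_injective.comp bU.equivFun.symm.injective
    obtain ⟨S1, hS1⟩ := L1.exists_leftInverse_of_injective hL1inj
    obtain ⟨R2, hR2⟩ :=
      L2.exists_rightInverse_of_surjective (LinearMap.range_eq_top.mpr hL2surj)
    intro C
    refine ⟨LinearMap.toMatrix' (R2 ∘ₗ C.mulVecLin ∘ₗ S1), ?_⟩
    ext i j
    have hmv : ∀ x, (LinearMap.toMatrix' (R2 ∘ₗ C.mulVecLin ∘ₗ S1)).mulVec x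
        = (R2 ∘ₗ C.mulVecLin ∘ₗ S1) x := by
      intro x
      rw [← Matrix.toLin'_apply, Matrix.toLin'_toMatrix']
    have hS1bU : S1 ((bU j : Fin m → ℂ)) = Pi.single j 1 := by
      have : (bU j : Fin m → ℂ) = L1 (Pi.single j 1) := by
        simp [L1, Module.Basis.equivFun_symm_apply, Pi.single_apply]
      rw [this, ← LinearMap.comp_apply, hS1, LinearMap.id_apply]
    have hcR2 : ∀ y i, c i ⬝ᵥ R2 y = y i := by
      intro y i
      have : L2 (R2 y) = y := by
        rw [← LinearMap.comp_apply, hR2, LinearMap.id_apply]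
      calc c i ⬝ᵥ R2 y = L2 (R2 y) i := rfl
        _ = y i := by rw [this]
    rw [hΦapp, hmv]
    simp only [LinearMap.comp_apply, hS1bU, hcR2]
    rw [Matrix.mulVecLin_apply, Matrix.mulVec_single]
    simp
  -- dimension count
  refine ⟨LinearMap.ker Φ, hker, ?_⟩
  have hrn := LinearMap.finrank_range_add_finrank_ker Φ
  rw [LinearMap.range_eq_top.mpr hΦsurj, finrank_top] at hrn
  have hdom : Module.finrank ℂ (Matrix (Fin n) (Fin m) ℂ) = n * m := by
    rw [Module.finrank_matrix]
    simp [mul_comm]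
  have htgt : Module.finrank ℂ (Matrix (Fin b) (Fin a) ℂ) = b * a := by
    rw [Module.finrank_matrix]
    simp
  rw [hdom, htgt] at hrn
  omega

/-- fiber-dimension claim in Lemma 12. For a fixed alignment
strategy `(U_i, V_i)` with `dim U_i = dim V_i = d_i ≤ min (M_i) (N_i)`, the set
of channel-matrix tuples `(H_{ij})_{i ≠ j}` for which the strategy is feasible
is a `ℂ`-subspace of dimension `∑_{i ≠ j} (N_i·M_j − d_i·d_j)`. -/
theorem channel_fiber_is_linear_of_dim
    (K : ℕ) (hK : 1 ≤ K) (M N d : Fin K → ℕ)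
    (hd : ∀ i, d i ≤ min (M i) (N i))
    (U : ∀ i, Submodule ℂ (Fin (M i) → ℂ))
    (V : ∀ i, Submodule ℂ (Fin (N i) → ℂ))
    (hU : ∀ i, Module.finrank ℂ (U i) = d i)
    (hV : ∀ i, Module.finrank ℂ (V i) = d i) :
    ∃ W : Submodule ℂ
        (∀ p : {p : Fin K × Fin K // p.1 ≠ p.2},
          Matrix (Fin (N p.1.1)) (Fin (M p.1.2)) ℂ),
      (W : Set (∀ p : {p : Fin K × Fin K // p.1 ≠ p.2},
          Matrix (Fin (N p.1.1)) (Fin (M p.1.2)) ℂ))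
        = {Hc | ∀ p : {p : Fin K × Fin K // p.1 ≠ p.2},
            ∀ u ∈ U p.1.2, ∀ v ∈ V p.1.1, star v ⬝ᵥ (Hc p).mulVec u = 0} ∧
      Module.finrank ℂ W
        = ∑ p : {p : Fin K × Fin K // p.1 ≠ p.2},
            (N p.1.1 * M p.1.2 - d p.1.1 * d p.1.2) := by
  classical
  choose Wp hWp hWd using fun p : {p : Fin K × Fin K // p.1 ≠ p.2} =>
    aux_channel_pair (M p.1.2) (N p.1.1) (d p.1.2) (d p.1.1)
      (U p.1.2) (V p.1.1) (hU p.1.2) (hV p.1.1)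
  refine ⟨Submodule.pi Set.univ Wp, ?_, ?_⟩
  · ext Hc
    simp only [SetLike.mem_coe, Submodule.mem_pi, Set.mem_univ, forall_true_left,
      Set.mem_setOf_eq]
    exact forall_congr' fun p => hWp p (Hc p)
  · let e : (Submodule.pi Set.univ Wp) ≃ₗ[ℂ] ∀ p, Wp p :=
      { toFun := fun x p => ⟨x.1 p, x.2 p (Set.mem_univ p)⟩
        map_add' := fun x y => rfl
        map_smul' := fun s x => rfl
        invFun := fun y => ⟨fun p => y p, fun p _ => (y p).2⟩
        left_inv := fun x => rfl
        right_inv := fun y => rfl }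
    rw [e.finrank_eq, Module.finrank_pi_fintype]
    exact Finset.sum_congr rfl fun p _ => hWd p
end
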